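/- For any f ∈ CB(k,n), the equality c·u_f·w_f^{-1} = u_{χ(f)}·w_{χ(f)}^{-1}·c holds in S_n, where c = (1,2,…,n) is the long cycle [2,3,…,n,1]. -/

import Mathlib

/-- `w` is `k`-Grassmannian. -/
def Grassmannian (n k : ℕ) (w : Equiv.Perm (Fin n)) : Prop :=
  (∀ i j : Fin n, i < j → (j : ℕ) < k → w i < w j) ∧
  (∀ i j : Fin n, i < j → k ≤ (i : ℕ) → w i < w j)

/-- Membership in `CB(k,n)`: bounded affine permutation of period `n` with `av = k`. -/
def CBmem (n k : ℕ) (f : ℤ → ℤ) : Prop :=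
  Function.Bijective f ∧ (∀ i : ℤ, f (i + n) = f i + n) ∧
  (∀ i : ℤ, i ≤ f i ∧ f i ≤ i + n) ∧
  ∑ i ∈ Finset.Icc (1 : ℤ) (n : ℤ), (f i - i) = (n : ℤ) * k

/-- The defining relation for `u_f = f·w·t_k⁻¹` (equivalently `f = u·t_k·w⁻¹`). -/
def rel (n k : ℕ) (w u : Equiv.Perm (Fin n)) (f : ℤ → ℤ) : Prop :=
  ∀ i : Fin n,
    f (((w i : ℕ) : ℤ) + 1) = ((u i : ℕ) : ℤ) + 1 + if (i : ℕ) < k then (n : ℤ) else 0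

/-- The cyclic shift `χ(f)(i) = f(i−1) + 1`. -/
def Chi (f : ℤ → ℤ) : ℤ → ℤ := fun i => f (i - 1) + 1

/-- For any `f ∈ CB(k,n)`, with `w_f, u_f` and `w_{χ(f)}, u_{χ(f)}` the
associated Grassmannian permutations and `k`-Bruhat elements, the equality
`c·u_f·w_f⁻¹ = u_{χ(f)}·w_{χ(f)}⁻¹·c` holds in `Sₙ`, where `c` is the long
cycle `[2,3,…,n,1]`. -/
theorem cyclic_shift_conjugation (n k : ℕ) (hn : 1 ≤ n) (hk : k ≤ n)
    (f : ℤ → ℤ) (hf : CBmem n k f)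
    (L Lc : Finset (Fin n))
    (hLf : ∀ i : Fin n, ((n : ℤ) < f (((i : ℕ) : ℤ) + 1) ↔ i ∈ L))
    (hLc : ∀ i : Fin n, ((n : ℤ) < Chi f (((i : ℕ) : ℤ) + 1) ↔ i ∈ Lc))
    (wf uf wg ug : Equiv.Perm (Fin n))
    (hwf : Grassmannian n k wf)
    (hwfL : (Finset.univ.filter (fun i : Fin n => (i : ℕ) < k)).image wf = L)
    (hwg : Grassmannian n k wg)
    (hwgL : (Finset.univ.filter (fun i : Fin n => (i : ℕ) < k)).image wg = Lc)
    (huf : rel n k wf uf f) (hug : rel n k wg ug (Chi f)) :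
    finRotate n * uf * wf⁻¹ = ug * wg⁻¹ * finRotate n := by
  obtain ⟨m, rfl⟩ : ∃ m, n = m + 1 := ⟨n - 1, by omega⟩
  have hinj : ∀ a b : Fin (m + 1),
      ((a : ℕ) : ZMod (m + 1)) = ((b : ℕ) : ZMod (m + 1)) → a = b := by
    intro a b h
    have h2 := congrArg ZMod.val h
    rwa [ZMod.val_cast_of_lt a.isLt, ZMod.val_cast_of_lt b.isLt, Fin.val_eq_val] at h2
  ext j
  simp only [Equiv.Perm.mul_apply]
  refine congrArg Fin.val (hinj _ _ ?_)
  have key1 := huf (wf⁻¹ j)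
  rw [show wf (wf⁻¹ j) = j from wf.apply_symm_apply j] at key1
  have key2 := hug (wg⁻¹ (finRotate (m + 1) j))
  rw [show wg (wg⁻¹ (finRotate (m + 1) j)) = finRotate (m + 1) j from wg.apply_symm_apply _] at key2
  simp only [Chi, add_sub_cancel_right] at key2
  have c1 : ((finRotate (m + 1) (uf (wf⁻¹ j)) : ℕ) : ZMod (m + 1))
      = ((f (((j : ℕ) : ℤ) + 1) : ℤ) : ZMod (m + 1)) := by
    have h1 := congrArg (fun z : ℤ => (z : ZMod (m + 1))) key1
    rw [h1, finRotate_succ_apply, Fin.val_add]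
    push_cast [ZMod.natCast_mod]
    split <;> simp
  have c2 : ((ug (wg⁻¹ (finRotate (m + 1) j)) : ℕ) : ZMod (m + 1))
      = ((f (((finRotate (m + 1) j : ℕ) : ℤ)) : ℤ) : ZMod (m + 1)) := by
    have key2' : f (((finRotate (m + 1) j : ℕ) : ℤ))
        = ((ug (wg⁻¹ (finRotate (m + 1) j)) : ℕ) : ℤ)
          + if ((wg⁻¹ (finRotate (m + 1) j) : Fin (m+1)) : ℕ) < k then ((m + 1 : ℕ) : ℤ) else 0 := by
      linarith [key2]
    have h2 := congrArg (fun z : ℤ => (z : ZMod (m + 1))) key2'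
    rw [h2]
    push_cast
    split <;> simp
  rw [c1, c2]
  by_cases h : (j : ℕ) + 1 < m + 1
  · have hrot : ((finRotate (m + 1) j : ℕ) : ℤ) = ((j : ℕ) : ℤ) + 1 := by
      rw [finRotate_succ_apply, Fin.val_add_one,
        if_neg (fun hlast => by simp [Fin.ext_iff, hlast] at h)]
      push_cast; ring
    rw [hrot]
  · have hjm : (j : ℕ) = m := by omega
    have hrot : ((finRotate (m + 1) j : ℕ) : ℤ) = 0 := by
      rw [finRotate_succ_apply, Fin.val_add_one,
        if_pos (by simp [Fin.ext_iff, hjm])]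
      simp
    have hj1 : ((j : ℕ) : ℤ) + 1 = ((m + 1 : ℕ) : ℤ) := by
      rw [hjm]; push_cast; ring
    have hper := hf.2.1 0
    rw [hrot, hj1, show (((m + 1 : ℕ) : ℤ)) = 0 + ((m + 1 : ℕ) : ℤ) by ring, hper]
    push_cast
    simp
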